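/- Let K be a kernel and ν a σ-finite measure on a measurable space (E, ℬ) such that for every B ∈ ℬ with ν(B) = 0 one has K1_B = 0 ν-a.e. If E₀ ∈ ℬ satisfies ν(E \ E₀) = 0, then there exists F ∈ ℬ with F ⊆ E₀, ν(E \ F) = 0, and K1_{E\F}(x) = 0 for every x ∈ F. -/

import Mathlib

open MeasureTheory ProbabilityTheory

/-- Kernel absorption lemma: if `K` is a kernel and `ν` a σ-finite measure such that
`ν(B) = 0` implies `K1_B = 0` ν-a.e., then for every measurable `E₀` with
`ν(E \ E₀) = 0` there exists a measurable `F ⊆ E₀` with `ν(E \ F) = 0` and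
`K1_{E\F} = 0` on `F`. -/
theorem kernel_absorption
    {E : Type*} [MeasurableSpace E]
    (K : Kernel E E) (ν : Measure E) [SigmaFinite ν]
    (hK : ∀ B : Set E, MeasurableSet B → ν B = 0 → ∀ᵐ x ∂ν, K x B = 0)
    (E₀ : Set E) (hE₀ : MeasurableSet E₀) (hν : ν E₀ᶜ = 0) :
    ∃ F : Set E, MeasurableSet F ∧ F ⊆ E₀ ∧ ν Fᶜ = 0 ∧ ∀ x ∈ F, K x Fᶜ = 0 := by
  -- Iteratively shrink `E₀` by removing the points that charge the complement.
  let A : ℕ → Set E := fun n => Nat.rec E₀ (fun _ An => An ∩ {x | K x Anᶜ = 0}) n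
  have hA0 : A 0 = E₀ := rfl
  have hAsucc : ∀ n, A (n + 1) = A n ∩ {x | K x (A n)ᶜ = 0} := fun n => rfl
  have hAmeas : ∀ n, MeasurableSet (A n) := by
    intro n
    induction n with
    | zero => exact hE₀
    | succ n ih =>
      rw [hAsucc]
      exact ih.inter ((Kernel.measurable_coe K ih.compl) (measurableSet_singleton 0))
  have hAnull : ∀ n, ν (A n)ᶜ = 0 := by
    intro n
    induction n with
    | zero => exact hν
    | succ n ih =>
      rw [hAsucc, Set.compl_inter]
      refine measure_union_null ih ?_
      have := hK (A n)ᶜ (hAmeas n).compl ih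
      rw [ae_iff] at this; exact this
  have hAanti : ∀ n, A (n + 1) ⊆ A n := fun n => by
    rw [hAsucc]; exact Set.inter_subset_left
  refine ⟨⋂ n, A n, MeasurableSet.iInter hAmeas, Set.iInter_subset A 0, ?_, ?_⟩
  · rw [Set.compl_iInter]
    exact measure_iUnion_null hAnull
  · intro x hx
    rw [Set.compl_iInter]
    have hzero : ∀ n, K x (A n)ᶜ = 0 := by
      intro n
      have hx' : x ∈ A (n + 1) := Set.mem_iInter.mp hx (n + 1)
      rw [hAsucc] at hx'
      exact hx'.2
    refine le_antisymm ?_ zero_le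
    calc (K x) (⋃ n, (A n)ᶜ) ≤ ∑' n, (K x) (A n)ᶜ := measure_iUnion_le _
      _ = 0 := by simp [hzero]
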